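/- If an ALCQP(p,s) concept C is satisfiable, then the ALCQI concept C_dom ⊓ 𝕋(C) is satisfiable, where 𝕋 is the reification translation. -/

import Mathlib

/-! ALCQP(p,s) and its reification translation 𝕋 into ALCQI. -/

/-- The two permutation operators: cyclic shift `p` and swap `s`. -/
inductive PS : Type
  | p : PS
  | s : PS

/-- The permutation of `Fin (n+2)` associated with an operator: for `p`, tuples of `p(R)`
are `t ∘ ρ` where `ρ 0 = n+1` (last coordinate moved to the front); for `s`, the
transposition of the last two coordinates. -/
def permOfOp (n : ℕ) : PS → Equiv.Perm (Fin (n + 2))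
  | .p => (finRotate (n + 2)).symm
  | .s => Equiv.swap (Fin.castSucc (Fin.last n)) (Fin.last (n + 1))

/-- Action of one operator on an `(n+2)`-ary relation. -/
def applyOp {A : Type*} (n : ℕ) (o : PS) (R : Set (Fin (n + 2) → A)) :
    Set (Fin (n + 2) → A) :=
  (fun t => t ∘ ⇑(permOfOp n o)) '' R

/-- Action of a permutation string (word over `{p,s}`) on an `(n+2)`-ary relation. -/
def applyString {A : Type*} (n : ℕ) : List PS → Set (Fin (n + 2) → A) → Set (Fin (n + 2) → A)
  | [], R => R
  | o :: rest, R => applyString n rest (applyOp n o R)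

/-- The permutation associated with a permutation string `π`: `permOfString n π i` is the
source coordinate of `R` sent to position `i` of `R^π`. -/
def permOfString (n : ℕ) : List PS → Equiv.Perm (Fin (n + 2))
  | [] => 1
  | o :: rest => (permOfString n rest).trans (permOfOp n o)

/-- ALCQP(p,s) concepts: a role `R` has arity `ar R + 2` and may be modified by a
permutation string `π`; `atLeast k R π cs` is `≥k R^π.(C₂,…,Cₙ)` with `n = ar R + 2`. -/
inductive ALCQP (Cn Rn : Type) (ar : Rn → ℕ) : Type
  | top : ALCQP Cn Rn ar
  | bot : ALCQP Cn Rn ar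
  | atom (A : Cn) : ALCQP Cn Rn ar
  | neg (C : ALCQP Cn Rn ar) : ALCQP Cn Rn ar
  | inter (C D : ALCQP Cn Rn ar) : ALCQP Cn Rn ar
  | atLeast (k : ℕ) (R : Rn) (π : List PS) (cs : Fin (ar R + 1) → ALCQP Cn Rn ar) :
      ALCQP Cn Rn ar

/-- An interpretation with polyadic roles of arity `ar R + 2`. -/
structure PInterp (Cn Rn : Type) (ar : Rn → ℕ) : Type 1 where
  Dom : Type
  cInt : Cn → Set Dom
  rInt : (R : Rn) → Set (Fin (ar R + 2) → Dom)

/-- Semantics of ALCQP(p,s): `u ∈ (≥k R^π.(C₂,…,Cₙ))^I` iff there are at least `k`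
tuples `(u, v₂, …, vₙ) ∈ (R^π)^I` with `vᵢ ∈ Cᵢ^I` for each `i`. -/
def qpsem {Cn Rn : Type} {ar : Rn → ℕ} (I : PInterp Cn Rn ar) :
    ALCQP Cn Rn ar → Set I.Dom
  | .top => Set.univ
  | .bot => ∅
  | .atom A => I.cInt A
  | .neg C => (qpsem I C)ᶜ
  | .inter C D => qpsem I C ∩ qpsem I D
  | .atLeast k R π cs =>
      { u | ∃ f : Fin k → (Fin (ar R + 2) → I.Dom), Function.Injective f ∧
          ∀ j, f j ∈ applyString (ar R) π (I.rInt R) ∧ f j 0 = u ∧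
            ∀ i : Fin (ar R + 1), f j i.succ ∈ qpsem I (cs i) }

/-- ALCQI concepts (with qualified number restrictions and inverse roles). -/
inductive ALCQI (Cn Rn : Type) : Type
  | top : ALCQI Cn Rn
  | bot : ALCQI Cn Rn
  | atom (A : Cn) : ALCQI Cn Rn
  | neg (C : ALCQI Cn Rn) : ALCQI Cn Rn
  | inter (C D : ALCQI Cn Rn) : ALCQI Cn Rn
  | atLeast (k : ℕ) (R : Rn) (inv : Bool) (C : ALCQI Cn Rn) : ALCQI Cn Rn

/-- Binary interpretations for ALCQI. -/
structure Interp (Cn Rn : Type) : Type 1 where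
  Dom : Type
  cInt : Cn → Set Dom
  rInt : Rn → Set (Dom × Dom)

/-- Semantics of ALCQI. -/
def qsem {Cn Rn : Type} (I : Interp Cn Rn) : ALCQI Cn Rn → Set I.Dom
  | .top => Set.univ
  | .bot => ∅
  | .atom A => I.cInt A
  | .neg C => (qsem I C)ᶜ
  | .inter C D => qsem I C ∩ qsem I D
  | .atLeast k R b C =>
      { u | ∃ f : Fin k → I.Dom, Function.Injective f ∧
          ∀ i, (if b then ((f i, u) ∈ I.rInt R) else ((u, f i) ∈ I.rInt R)) ∧
            f i ∈ qsem I C }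

/-- Target concept names of the translation: old concept names, the fresh `C_dom`,
and a fresh `L_R` for each role name `R`. -/
abbrev TCn (Cn Rn : Type) : Type := Cn ⊕ (Unit ⊕ Rn)

/-- The fresh concept `C_dom`. -/
def cdom {Cn Rn : Type} : ALCQI (TCn Cn Rn) ℕ := .atom (.inr (.inl ()))

/-- The fresh concept `L_R`. -/
def lR {Cn Rn : Type} (R : Rn) : ALCQI (TCn Cn Rn) ℕ := .atom (.inr (.inr R))

/-- Finite conjunction. -/
def bigAnd {Cn Rn : Type} : List (ALCQI Cn Rn) → ALCQI Cn Rn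
  | [] => .top
  | c :: cs => .inter c (bigAnd cs)

/-- `∃F.C` as `≥1 F.C`. -/
def exI {Cn Rn : Type} (F : Rn) (C : ALCQI Cn Rn) : ALCQI Cn Rn := .atLeast 1 F false C

/-- `∀F.C` as `¬ ≥1 F.(¬C)`. -/
def allI {Cn Rn : Type} (F : Rn) (C : ALCQI Cn Rn) : ALCQI Cn Rn :=
  .neg (.atLeast 1 F false (.neg C))

/-- `=1 F.⊤`: the out-degree of `F` is exactly one. -/
def eqOneTop {Cn Rn : Type} (F : Rn) : ALCQI Cn Rn :=
  .inter (.atLeast 1 F false .top) (.neg (.atLeast 2 F false .top))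

/-- `χ_R`: `L_R` holds and every other `L_S` fails. -/
noncomputable def chi {Cn Rn : Type} [Fintype Rn] [DecidableEq Rn] (R : Rn) : ALCQI (TCn Cn Rn) ℕ :=
  .inter (lR R) (bigAnd (((Finset.univ.erase R).toList).map fun S => .neg (lR S)))

/-- `Outdeg_n`: each `F_i` (for `i < n`) has out-degree exactly one with range in `C_dom`. -/
def outdeg {Cn Rn : Type} (n : ℕ) : ALCQI (TCn Cn Rn) ℕ :=
  bigAnd ((List.range n).map fun i => .inter (eqOneTop i) (allI i cdom))

/-- The reification translation `𝕋` from ALCQP(p,s) into ALCQI: homomorphic on Booleans,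
and `𝕋(≥k R^π.(C₂,…,Cₙ)) = ≥k F_{π₁}⁻¹.(¬C_dom ⊓ χ_R ⊓ Outdeg_n ⊓ ∃F_{π₂}.𝕋(C₂) ⊓ … ⊓
∃F_{πₙ}.𝕋(Cₙ))`, where `πᵢ` is the source coordinate of `R` sent to position `i` by `π`. -/
noncomputable def reify {Cn Rn : Type} [Fintype Rn] [DecidableEq Rn] {ar : Rn → ℕ} :
    ALCQP Cn Rn ar → ALCQI (TCn Cn Rn) ℕ
  | .top => .top
  | .bot => .bot
  | .atom A => .atom (.inl A)
  | .neg C => .neg (reify C)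
  | .inter C D => .inter (reify C) (reify D)
  | .atLeast k R π cs =>
      .atLeast k ((permOfString (ar R) π 0 : Fin (ar R + 2)).val) true
        (bigAnd ((.neg cdom) :: chi R :: outdeg (ar R + 2) ::
          List.ofFn fun i : Fin (ar R + 1) =>
            exI ((permOfString (ar R) π i.succ : Fin (ar R + 2)).val) (reify (cs i))))

/-- Concept satisfiability for ALCQP(p,s). -/
def satQP {Cn Rn : Type} {ar : Rn → ℕ} (C : ALCQP Cn Rn ar) : Prop :=
  ∃ (I : PInterp Cn Rn ar) (u : I.Dom), u ∈ qpsem I C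

/-- Concept satisfiability for ALCQI. -/
def satQI {Cn Rn : Type} (C : ALCQI Cn Rn) : Prop :=
  ∃ (I : Interp Cn Rn) (u : I.Dom), u ∈ qsem I C

/-! ### Auxiliary development for the proof -/

section Aux

lemma qsem_bigAnd {Cn' Rn' : Type} (J : Interp Cn' Rn') (l : List (ALCQI Cn' Rn')) (x : J.Dom) :
    x ∈ qsem J (bigAnd l) ↔ ∀ c ∈ l, x ∈ qsem J c := by
  induction l with
  | nil => simp [bigAnd, qsem]
  | cons c cs ih => simp [bigAnd, qsem, Set.mem_inter_iff, ih]

lemma mem_exI_iff {Cn' Rn' : Type} (J : Interp Cn' Rn') (F : Rn') (C : ALCQI Cn' Rn')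
    (x : J.Dom) :
    x ∈ qsem J (exI F C) ↔ ∃ y, (x, y) ∈ J.rInt F ∧ y ∈ qsem J C := by
  constructor
  · rintro ⟨f, -, hf⟩
    refine ⟨f 0, ?_, (hf 0).2⟩
    have := (hf 0).1
    simpa using this
  · rintro ⟨y, h1, h2⟩
    exact ⟨fun _ => y, fun a b _ => Subsingleton.elim a b, fun _ => ⟨by simpa using h1, h2⟩⟩

lemma applyString_eq {A : Type*} (n : ℕ) (π : List PS) (R : Set (Fin (n + 2) → A)) :
    applyString n π R = (fun t => t ∘ ⇑(permOfString n π)) '' R := by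
  induction π generalizing R with
  | nil =>
    simp only [applyString, permOfString]
    ext t
    simp
  | cons o rest ih =>
    simp only [applyString, applyOp, ih, Set.image_image, permOfString]
    apply Set.image_congr'
    intro t
    rfl

variable {Cn Rn : Type} [Fintype Rn] [DecidableEq Rn] {ar : Rn → ℕ}

/-- The reified binary interpretation built from a polyadic interpretation. -/
@[reducible]
def TI (I : PInterp Cn Rn ar) : Interp (TCn Cn Rn) ℕ where
  Dom := I.Dom ⊕ (Σ R : Rn, {t : Fin (ar R + 2) → I.Dom // t ∈ I.rInt R})
  cInt := fun c => match c with
    | .inl A => fun x => match x with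
      | .inl a => a ∈ I.cInt A
      | .inr _ => False
    | .inr (.inl _) => fun x => match x with
      | .inl _ => True
      | .inr _ => False
    | .inr (.inr S) => fun x => match x with
      | .inl _ => False
      | .inr q => q.1 = S
  rInt := fun F => fun q => match q with
    | (.inr p, .inl a) => ∃ i : Fin (ar p.1 + 2), (i : ℕ) = F ∧ a = p.2.val i
    | _ => False

lemma TI_rInt_inl (I : PInterp Cn Rn ar) (F : ℕ) (a : I.Dom) (y : (TI I).Dom) :
    (Sum.inl a, y) ∉ (TI I).rInt F := by
  cases y <;> exact fun h => h

lemma TI_rInt_inr_iff (I : PInterp Cn Rn ar) (F : ℕ)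
    (p : Σ R : Rn, {t : Fin (ar R + 2) → I.Dom // t ∈ I.rInt R}) (y : (TI I).Dom) :
    ((Sum.inr p, y) ∈ (TI I).rInt F) ↔
      ∃ i : Fin (ar p.1 + 2), (i : ℕ) = F ∧ y = Sum.inl (p.2.val i) := by
  cases y with
  | inl a =>
    constructor
    · rintro ⟨i, h1, h2⟩; exact ⟨i, h1, by rw [h2]⟩
    · rintro ⟨i, h1, h2⟩; exact ⟨i, h1, by injection h2⟩
  | inr q =>
    constructor
    · exact fun h => h.elim
    · rintro ⟨i, -, h⟩; exact absurd h (by simp)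

lemma mem_cdom_iff (I : PInterp Cn Rn ar) (x : (TI I).Dom) :
    x ∈ qsem (TI I) (cdom (Cn := Cn) (Rn := Rn)) ↔ ∃ a, x = Sum.inl a := by
  cases x with
  | inl a => exact iff_of_true trivial ⟨a, rfl⟩
  | inr p =>
    refine iff_of_false (fun h => h) ?_
    rintro ⟨a, ha⟩
    exact Sum.inr_ne_inl ha

lemma mem_chi_iff (I : PInterp Cn Rn ar) (R : Rn)
    (p : Σ S : Rn, {t : Fin (ar S + 2) → I.Dom // t ∈ I.rInt S}) :
    (Sum.inr p ∈ qsem (TI I) (chi (Cn := Cn) R)) ↔ p.1 = R := by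
  unfold chi
  rw [show qsem (TI I) (.inter (lR R) _) =
      qsem (TI I) (lR R) ∩ qsem (TI I) (bigAnd _) from rfl]
  rw [Set.mem_inter_iff, qsem_bigAnd]
  constructor
  · rintro ⟨h, -⟩
    exact h
  · intro h
    refine ⟨h, ?_⟩
    intro c hc
    simp only [List.mem_map] at hc
    obtain ⟨S, hS, rfl⟩ := hc
    have hSne : S ≠ R := (Finset.mem_erase.mp (Finset.mem_toList.mp hS)).1
    intro hmem
    have hm : p.1 = S := hmem
    exact hSne (hm.symm.trans h)

lemma mem_outdeg (I : PInterp Cn Rn ar)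
    (p : Σ S : Rn, {t : Fin (ar S + 2) → I.Dom // t ∈ I.rInt S}) :
    Sum.inr p ∈ qsem (TI I) (outdeg (Cn := Cn) (Rn := Rn) (ar p.1 + 2)) := by
  rw [outdeg, qsem_bigAnd]
  intro c hc
  simp only [List.mem_map, List.mem_range] at hc
  obtain ⟨i, hi, rfl⟩ := hc
  constructor
  · -- eqOneTop i
    constructor
    · refine ⟨fun _ => Sum.inl (p.2.val ⟨i, hi⟩), fun a b _ => Subsingleton.elim a b,
        fun j => ⟨?_, trivial⟩⟩
      simpa using (TI_rInt_inr_iff I i p _).mpr ⟨⟨i, hi⟩, rfl, rfl⟩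
    · rintro ⟨f, hinj, hf⟩
      have key : ∀ j : Fin 2, f j = Sum.inl (p.2.val ⟨i, hi⟩) := by
        intro j
        have := (hf j).1
        simp only [if_pos rfl] at this
        obtain ⟨i', hi', hy⟩ := (TI_rInt_inr_iff I i p (f j)).mp (by simpa using this)
        have : i' = ⟨i, hi⟩ := Fin.ext hi'
        rw [hy, this]
      exact absurd (hinj ((key 0).trans (key 1).symm)) (by decide)
  · -- allI i cdom
    rintro ⟨f, -, hf⟩
    have h1 := (hf 0).1
    simp only [if_neg (by simp : ¬ (false = true))] at h1
    obtain ⟨i', -, hy⟩ := (TI_rInt_inr_iff I i p (f 0)).mp h1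
    have h2 := (hf 0).2
    exact h2 ((mem_cdom_iff I (f 0)).mpr ⟨_, hy⟩)

lemma key_lemma (I : PInterp Cn Rn ar) (C : ALCQP Cn Rn ar) (x : I.Dom) :
    Sum.inl x ∈ qsem (TI I) (reify C) ↔ x ∈ qpsem I C := by
  induction C generalizing x with
  | top => simp [reify, qsem, qpsem]
  | bot => simp [reify, qsem, qpsem]
  | atom A =>
    show ((TI I).cInt (Sum.inl A)) (Sum.inl x) ↔ _
    simp [TI, qpsem]
  | neg C ih => simpa [reify, qsem, qpsem] using (ih x).not
  | inter C D ih1 ih2 =>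
    simp only [reify, qsem, qpsem, Set.mem_inter_iff]
    rw [ih1, ih2]
  | atLeast k R π cs ih =>
    simp only [reify]
    set σ : Equiv.Perm (Fin (ar R + 2)) := permOfString (ar R) π with hσ
    constructor
    · rintro ⟨f, hinj, hf⟩
      have step : ∀ j : Fin k, ∃ tt : {t : Fin (ar R + 2) → I.Dom // t ∈ I.rInt R},
          f j = Sum.inr ⟨R, tt⟩ ∧ tt.val (σ 0) = x ∧
          ∀ i : Fin (ar R + 1), tt.val (σ i.succ) ∈ qpsem I (cs i) := by
        intro j
        obtain ⟨hedge, hbody⟩ := hf j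
        rw [if_pos rfl] at hedge
        cases hfj : f j with
        | inl a =>
          rw [hfj] at hedge
          exact absurd hedge (TI_rInt_inl I _ a _)
        | inr p =>
          obtain ⟨S, tt⟩ := p
          rw [hfj] at hedge hbody
          rw [qsem_bigAnd] at hbody
          have hchi : S = R := (mem_chi_iff I R ⟨S, tt⟩).mp
            (hbody _ (List.mem_cons_of_mem _ (List.mem_cons_self)))
          subst hchi
          obtain ⟨i0, hi0, hx⟩ := (TI_rInt_inr_iff I _ ⟨S, tt⟩ _).mp hedge
          have hi0' : i0 = σ 0 := Fin.ext hi0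
          subst hi0'
          have hx' : tt.val (σ 0) = x := by injection hx with h; exact h.symm
          refine ⟨tt, rfl, hx', ?_⟩
          intro i
          have hex := hbody (exI ((σ i.succ : Fin (ar S + 2)) : ℕ) (reify (cs i)))
            (List.mem_cons_of_mem _ (List.mem_cons_of_mem _ (List.mem_cons_of_mem _
              ((List.mem_ofFn).mpr ⟨i, rfl⟩))))
          rw [mem_exI_iff] at hex
          obtain ⟨y, hy1, hy2⟩ := hex
          obtain ⟨i', hi', rfl⟩ := (TI_rInt_inr_iff I _ ⟨S, tt⟩ y).mp hy1
          have hi'' : i' = σ i.succ := Fin.ext hi'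
          subst hi''
          exact (ih i _).mp hy2
      choose tt htt h0 hcsm using step
      refine ⟨fun j => (tt j).val ∘ ⇑σ, ?_, ?_⟩
      · intro j j' hEq
        apply hinj
        have heq2 : tt j = tt j' := by
          apply Subtype.ext
          funext a
          have := congrFun hEq (σ.symm a)
          simpa using this
        rw [htt j, htt j', heq2]
      · intro j
        refine ⟨?_, h0 j, fun i => hcsm j i⟩
        rw [applyString_eq]
        exact ⟨(tt j).val, (tt j).2, rfl⟩
    · rintro ⟨F, hinj, hF⟩
      have hmem : ∀ j, (fun a => F j (σ.symm a)) ∈ I.rInt R := by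
        intro j
        have h1 := (hF j).1
        rw [applyString_eq] at h1
        obtain ⟨t, ht, hEq⟩ := h1
        have ht2 : (fun a => F j (σ.symm a)) = t := by
          funext a
          rw [← hEq]
          simp [hσ]
        rw [ht2]; exact ht
      refine ⟨fun j => Sum.inr ⟨R, ⟨fun a => F j (σ.symm a), hmem j⟩⟩, ?_, ?_⟩
      · intro j j' hEq
        apply hinj
        have h1 := Sum.inr_injective hEq
        have h2 : (⟨fun a => F j (σ.symm a), hmem j⟩ : {t // t ∈ I.rInt R}) =
            ⟨fun a => F j' (σ.symm a), hmem j'⟩ := eq_of_heq (Sigma.mk.inj_iff.mp h1).2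
        have h3 := congrArg Subtype.val h2
        funext a
        have := congrFun h3 (σ a)
        simpa using this
      · intro j
        constructor
        · rw [if_pos rfl]
          refine (TI_rInt_inr_iff I _ _ _).mpr ⟨σ 0, rfl, ?_⟩
          simp [(hF j).2.1]
        · rw [qsem_bigAnd]
          intro c hc
          simp only [List.mem_cons, List.mem_ofFn, Set.mem_range] at hc
          rcases hc with rfl | rfl | rfl | ⟨i, rfl⟩
          · intro hmm
            obtain ⟨a, ha⟩ := (mem_cdom_iff I _).mp hmm
            exact Sum.inr_ne_inl ha
          · exact (mem_chi_iff I R _).mpr rfl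
          · exact mem_outdeg I ⟨R, ⟨fun a => F j (σ.symm a), hmem j⟩⟩
          · rw [mem_exI_iff]
            refine ⟨Sum.inl (F j i.succ), ?_, (ih i _).mpr ((hF j).2.2 i)⟩
            exact (TI_rInt_inr_iff I _ _ _).mpr ⟨σ i.succ, rfl, by simp⟩

end Aux

/-- If an ALCQP(p,s) concept `C` is satisfiable, then the ALCQI concept
`C_dom ⊓ 𝕋(C)` is satisfiable. -/
theorem satQP_implies_satQI {Cn Rn : Type} [Fintype Rn] [DecidableEq Rn] {ar : Rn → ℕ}
    (C : ALCQP Cn Rn ar) (h : satQP C) :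
    satQI (.inter cdom (reify C)) := by
  obtain ⟨I, u, hu⟩ := h
  exact ⟨TI I, Sum.inl u, trivial, (key_lemma I C u).mpr hu⟩
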